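/- Let p(x) = ∏_{i=1}^k (x - x_i) where 0 ≤ x_i ≤ a for every i. Then ∫_0^a |p(x)| dx ≤ a^{k+1}/(k+1), and this maximum value a^{k+1}/(k+1) is attained when all x_i = 0 (i.e., for p(x) = x^k). -/

import Mathlib

open intervalIntegral

/-- AM-GM: product of `k` nonnegative reals is at most `(∑ yᵢ^k)/k`. -/
lemma amgm_aux {k : ℕ} (hk : 1 ≤ k) (y : Fin k → ℝ) (hy : ∀ i, 0 ≤ y i) :
    ∏ i, y i ≤ (∑ i, y i ^ k) / k := by
  have hkpos : (0:ℝ) < k := by exact_mod_cast hk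
  have h := Real.geom_mean_le_arith_mean_weighted Finset.univ (fun _ => (k:ℝ)⁻¹)
    (fun i => y i ^ k) (fun i _ => by positivity)
    (by
      rw [Finset.sum_const, Finset.card_univ, Fintype.card_fin, nsmul_eq_mul]
      exact mul_inv_cancel₀ (ne_of_gt hkpos))
    (fun i _ => pow_nonneg (hy i) k)
  have hL : (∏ i : Fin k, (y i ^ k) ^ ((k:ℝ)⁻¹)) = ∏ i, y i := by
    refine Finset.prod_congr rfl fun i _ => ?_
    rw [← Real.rpow_natCast (y i) k, ← Real.rpow_mul (hy i)]
    rw [mul_inv_cancel₀ (ne_of_gt hkpos), Real.rpow_one]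
  have hR : (∑ i : Fin k, (k:ℝ)⁻¹ * (y i ^ k)) = (∑ i, y i ^ k) / k := by
    rw [← Finset.mul_sum]; ring
  calc ∏ i, y i = ∏ i : Fin k, (y i ^ k) ^ ((k:ℝ)⁻¹) := hL.symm
    _ ≤ ∑ i : Fin k, (k:ℝ)⁻¹ * (y i ^ k) := h
    _ = (∑ i, y i ^ k) / k := hR

/-- `∫₀ᵃ |t-c|^k dt = (c^(k+1)+(a-c)^(k+1))/(k+1)` for `0 ≤ c ≤ a`. -/
lemma int_abs_pow (a c : ℝ) (hc : 0 ≤ c) (hca : c ≤ a) (k : ℕ) :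
    ∫ t in (0:ℝ)..a, |t - c| ^ k = (c^(k+1) + (a-c)^(k+1))/(k+1) := by
  have h1 : IntervalIntegrable (fun t => |t - c| ^ k) MeasureTheory.volume 0 c :=
    (Continuous.pow (continuous_abs.comp (continuous_id.sub continuous_const)) k).intervalIntegrable _ _
  have h2 : IntervalIntegrable (fun t => |t - c| ^ k) MeasureTheory.volume c a :=
    (Continuous.pow (continuous_abs.comp (continuous_id.sub continuous_const)) k).intervalIntegrable _ _
  rw [← intervalIntegral.integral_add_adjacent_intervals h1 h2]
  have e1 : (∫ t in (0:ℝ)..c, |t - c| ^ k) = c ^ (k+1) / (k+1) := by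
    have : (∫ t in (0:ℝ)..c, |t - c| ^ k) = ∫ t in (0:ℝ)..c, (c - t) ^ k := by
      refine intervalIntegral.integral_congr fun t ht => ?_
      rw [Set.uIcc_of_le hc] at ht
      rw [abs_of_nonpos (by linarith [ht.2] : t - c ≤ 0), neg_sub]
    rw [this]
    have := intervalIntegral.integral_comp_sub_left (a := (0:ℝ)) (b := c)
      (fun t => t ^ k) c
    simp only [sub_zero, sub_self] at this
    rw [this, integral_pow]
    simp
  have e2 : (∫ t in c..a, |t - c| ^ k) = (a - c) ^ (k+1) / (k+1) := by
    have : (∫ t in c..a, |t - c| ^ k) = ∫ t in c..a, (t - c) ^ k := by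
      refine intervalIntegral.integral_congr fun t ht => ?_
      rw [Set.uIcc_of_le hca] at ht
      rw [abs_of_nonneg (by linarith [ht.1] : (0:ℝ) ≤ t - c)]
    rw [this]
    have := intervalIntegral.integral_comp_sub_right (a := c) (b := a)
      (fun t => t ^ k) c
    simp only [sub_self] at this
    rw [this, integral_pow]
    simp
  rw [e1, e2]; ring

/-- For `p(x) = ∏ i, (x - x i)` with all `x i ∈ [0,a]`, one has
`∫_0^a |p(x)| dx ≤ a^(k+1)/(k+1)`, and the maximum value `a^(k+1)/(k+1)` is attained
when all `x i = 0`, i.e. for `p(x) = x^k`. -/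
theorem integral_abs_prod_le (a : ℝ) (ha : 0 < a) (k : ℕ) (hk : 1 ≤ k)
    (x : Fin k → ℝ) (hx : ∀ i, x i ∈ Set.Icc (0 : ℝ) a) :
    (∫ t in (0:ℝ)..a, |∏ i, (t - x i)|) ≤ a ^ (k + 1) / (k + 1) ∧
      ((∀ i, x i = 0) →
        (∫ t in (0:ℝ)..a, |∏ i, (t - x i)|) = a ^ (k + 1) / (k + 1)) := by
  have hkpos : (0:ℝ) < k := by exact_mod_cast hk
  constructor
  · -- inequality
    have hf : Continuous fun t : ℝ => |∏ i, (t - x i)| :=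
      (continuous_finset_prod _ fun i _ => continuous_id.sub continuous_const).abs
    have hg : Continuous fun t : ℝ => (∑ i, |t - x i| ^ k) / k :=
      (continuous_finset_sum _ fun i _ =>
        ((continuous_id.sub continuous_const).abs.pow k)).div_const _
    have hmono : (∫ t in (0:ℝ)..a, |∏ i, (t - x i)|)
        ≤ ∫ t in (0:ℝ)..a, (∑ i, |t - x i| ^ k) / k := by
      refine intervalIntegral.integral_mono_on ha.le
        (hf.intervalIntegrable _ _) (hg.intervalIntegrable _ _) fun t ht => ?_
      rw [Finset.abs_prod]
      exact amgm_aux hk (fun i => |t - x i|) (fun i => abs_nonneg _)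
    refine hmono.trans ?_
    have hswap : (∫ t in (0:ℝ)..a, (∑ i, |t - x i| ^ k) / k)
        = (∑ i, ∫ t in (0:ℝ)..a, |t - x i| ^ k) / k := by
      rw [intervalIntegral.integral_div, intervalIntegral.integral_finset_sum]
      intro i _
      exact (((continuous_id.sub continuous_const).abs.pow k)).intervalIntegrable _ _
    rw [hswap]
    have hterm : ∀ i, (∫ t in (0:ℝ)..a, |t - x i| ^ k) ≤ a ^ (k+1) / (k+1) := by
      intro i
      obtain ⟨h0, h1⟩ := hx i
      rw [int_abs_pow a (x i) h0 h1 k]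
      have hb1 : (x i) ^ (k+1) ≤ (x i) * a ^ k := by
        calc (x i) ^ (k+1) = (x i) * (x i) ^ k := by ring
          _ ≤ (x i) * a ^ k := by
              exact mul_le_mul_of_nonneg_left (pow_le_pow_left₀ h0 h1 k) h0
      have hb2 : (a - x i) ^ (k+1) ≤ (a - x i) * a ^ k := by
        calc (a - x i) ^ (k+1) = (a - x i) * (a - x i) ^ k := by ring
          _ ≤ (a - x i) * a ^ k := by
              exact mul_le_mul_of_nonneg_left
                (pow_le_pow_left₀ (by linarith) (by linarith) k) (by linarith)
      have : (x i) ^ (k+1) + (a - x i) ^ (k+1) ≤ a ^ (k+1) := by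
        have : (x i) * a ^ k + (a - x i) * a ^ k = a ^ (k+1) := by ring
        linarith
      gcongr
    calc (∑ i, ∫ t in (0:ℝ)..a, |t - x i| ^ k) / k
        ≤ (∑ _i : Fin k, a ^ (k+1) / (k+1)) / k := by
          gcongr with i
          exact hterm i
      _ = a ^ (k+1) / (k+1) := by
          rw [Finset.sum_const, Finset.card_univ, Fintype.card_fin]
          rw [nsmul_eq_mul, mul_div_cancel_left₀ _ hkpos.ne']
  · -- equality when all x i = 0
    intro h0
    have : (∫ t in (0:ℝ)..a, |∏ i, (t - x i)|) = ∫ t in (0:ℝ)..a, t ^ k := by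
      refine intervalIntegral.integral_congr fun t ht => ?_
      rw [Set.uIcc_of_le ha.le] at ht
      have : (∏ i, (t - x i)) = t ^ k := by
        simp only [h0, sub_zero, Finset.prod_const, Finset.card_univ, Fintype.card_fin]
      rw [this, abs_of_nonneg (pow_nonneg ht.1 k)]
    rw [this, integral_pow]
    ring
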